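/- Let m ≤ n and k = m+n-2. Let a_1,...,a_k ∈ ℝ^m and b_1,...,b_k ∈ ℝ^n be in general position, meaning: every m of the a_i are linearly independent (any subset of size ≤ m of the a_i is linearly independent) and every n of the b_j are linearly independent. Then the number of points [x⊗y] ∈ ℙ^{m-1}×ℙ^{n-1} satisfying (a_i^T x)(b_i^T y) = 0 for all i = 1,...,k is exactly C(m+n-2, m-1). -/
import Mathlib


open Matrix
open scoped LinearAlgebra.Projectivization

private def segreKer {k m : ℕ} (A : Fin k → Fin m → ℝ) (S : Finset (Fin k)) :
    Submodule ℝ (Fin m → ℝ) :=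
  LinearMap.ker (Matrix.mulVecLin (Matrix.of (fun i : S => A i)))

private lemma mem_segreKer {k m : ℕ} (A : Fin k → Fin m → ℝ) (S : Finset (Fin k))
    (x : Fin m → ℝ) : x ∈ segreKer A S ↔ ∀ i ∈ S, A i ⬝ᵥ x = 0 := by
  simp only [segreKer, LinearMap.mem_ker, mulVecLin_apply, funext_iff, Pi.zero_apply]
  constructor
  · intro h i hi
    exact h ⟨i, hi⟩
  · rintro h ⟨i, hi⟩
    exact h i hi

private lemma finrank_segreKer {k m : ℕ} (A : Fin k → Fin m → ℝ) (S : Finset (Fin k))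
    (hA : LinearIndependent ℝ (fun i : S => A i)) :
    Module.finrank ℝ (segreKer A S) = m - S.card := by
  have h1 := LinearMap.finrank_range_add_finrank_ker
    (Matrix.mulVecLin (Matrix.of (fun i : S => A i)))
  have h2 : (Matrix.of (fun i : S => A i)).rank = S.card := by
    have := LinearIndependent.rank_matrix (M := Matrix.of (fun i : S => A i)) hA
    simpa using this
  rw [Matrix.rank] at h2
  have h3 : Module.finrank ℝ (Fin m → ℝ) = m := by simp
  rw [h2, h3] at h1
  have hle : S.card ≤ m := by
    have := hA.fintype_card_le_finrank
    simpa using this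
  unfold segreKer
  omega

private lemma mk_eq_mk_of_finrank_one {V : Type*} [AddCommGroup V] [Module ℝ V]
    (W : Submodule ℝ V) (hW : Module.finrank ℝ W = 1)
    {x y : V} (hx : x ∈ W) (hy : y ∈ W) (hx0 : x ≠ 0) (hy0 : y ≠ 0) :
    Projectivization.mk ℝ x hx0 = Projectivization.mk ℝ y hy0 := by
  obtain ⟨v, hv0, hv⟩ := finrank_eq_one_iff'.1 hW
  obtain ⟨c, hc⟩ := hv ⟨x, hx⟩
  obtain ⟨d, hd⟩ := hv ⟨y, hy⟩
  have hcx : c • (v : V) = x := congrArg Subtype.val hc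
  have hdy : d • (v : V) = y := congrArg Subtype.val hd
  have hd0 : d ≠ 0 := by
    rintro rfl
    rw [zero_smul] at hdy
    exact hy0 hdy.symm
  rw [Projectivization.mk_eq_mk_iff']
  refine ⟨c * d⁻¹, ?_⟩
  rw [← hdy, ← hcx, smul_smul, mul_assoc, inv_mul_cancel₀ hd0, mul_one]

private lemma exists_ne_zero_mem_of_finrank_one {V : Type*} [AddCommGroup V] [Module ℝ V]
    (W : Submodule ℝ V) (hW : Module.finrank ℝ W = 1) :
    ∃ x : V, x ∈ W ∧ x ≠ 0 := by
  obtain ⟨v, hv0, -⟩ := finrank_eq_one_iff'.1 hW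
  exact ⟨(v : V), v.2, by simpa using hv0⟩

/-- For vectors `a_1,…,a_k ∈ ℝ^m`, `b_1,…,b_k ∈ ℝ^n` in general position
(`k = m+n-2`), the number of pairs of projective points `([x],[y])` with
`(a_i ⬝ x)(b_i ⬝ y) = 0` for all `i` is exactly `C(m+n-2, m-1)`. -/
theorem count_segre_slice_points (m n : ℕ) (hm : 2 ≤ m) (hmn : m ≤ n)
    (a : Fin (m + n - 2) → Fin m → ℝ) (b : Fin (m + n - 2) → Fin n → ℝ)
    (ha : ∀ S : Finset (Fin (m + n - 2)), S.card ≤ m →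
      LinearIndependent ℝ (fun i : S => a i))
    (hb : ∀ S : Finset (Fin (m + n - 2)), S.card ≤ n →
      LinearIndependent ℝ (fun i : S => b i)) :
    Nat.card {pq : ℙ ℝ (Fin m → ℝ) × ℙ ℝ (Fin n → ℝ) |
        ∀ i, (a i ⬝ᵥ pq.1.rep) * (b i ⬝ᵥ pq.2.rep) = 0} =
      (m + n - 2).choose (m - 1) := by
  classical
  have hn : 2 ≤ n := le_trans hm hmn
  -- the zero set of a nonzero vector has at most m-1 elements
  have cardA : ∀ x : Fin m → ℝ, x ≠ 0 →
      (Finset.univ.filter (fun i : Fin (m + n - 2) => a i ⬝ᵥ x = 0)).card ≤ m - 1 := by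
    intro x hx
    by_contra hcon
    push_neg at hcon
    have hmle : m ≤ (Finset.univ.filter (fun i : Fin (m + n - 2) => a i ⬝ᵥ x = 0)).card := by
      omega
    obtain ⟨t, hts, htc⟩ := Finset.exists_subset_card_eq hmle
    have hker : x ∈ segreKer a t := by
      rw [mem_segreKer]
      intro i hi
      have := hts hi
      simp only [Finset.mem_filter] at this
      exact this.2
    have hfr : Module.finrank ℝ (segreKer a t) = 0 := by
      rw [finrank_segreKer a t (ha t (le_of_eq htc)), htc]
      omega
    have : segreKer a t = ⊥ := Submodule.finrank_eq_zero.1 hfr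
    rw [this, Submodule.mem_bot] at hker
    exact hx hker
  have cardB : ∀ y : Fin n → ℝ, y ≠ 0 →
      (Finset.univ.filter (fun i : Fin (m + n - 2) => b i ⬝ᵥ y = 0)).card ≤ n - 1 := by
    intro y hy
    by_contra hcon
    push_neg at hcon
    have hnle : n ≤ (Finset.univ.filter (fun i : Fin (m + n - 2) => b i ⬝ᵥ y = 0)).card := by
      omega
    obtain ⟨t, hts, htc⟩ := Finset.exists_subset_card_eq hnle
    have hker : y ∈ segreKer b t := by
      rw [mem_segreKer]
      intro i hi
      have := hts hi
      simp only [Finset.mem_filter] at this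
      exact this.2
    have hfr : Module.finrank ℝ (segreKer b t) = 0 := by
      rw [finrank_segreKer b t (hb t (le_of_eq htc)), htc]
      omega
    have : segreKer b t = ⊥ := Submodule.finrank_eq_zero.1 hfr
    rw [this, Submodule.mem_bot] at hker
    exact hy hker
  set T : Set (ℙ ℝ (Fin m → ℝ) × ℙ ℝ (Fin n → ℝ)) :=
    {pq | ∀ i, (a i ⬝ᵥ pq.1.rep) * (b i ⬝ᵥ pq.2.rep) = 0} with hT
  set zeroA : ℙ ℝ (Fin m → ℝ) → Finset (Fin (m + n - 2)) :=
    fun p => Finset.univ.filter (fun i => a i ⬝ᵥ p.rep = 0) with hzA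
  -- for any solution, the zero set of the first component has card m-1,
  -- and the complement is contained in the zero set of the second component
  have key : ∀ pq ∈ T, (zeroA pq.1).card = m - 1 ∧
      ∀ i ∉ zeroA pq.1, b i ⬝ᵥ pq.2.rep = 0 := by
    rintro ⟨p, q⟩ hpq
    have hcompl : ∀ i ∉ zeroA p, b i ⬝ᵥ q.rep = 0 := by
      intro i hi
      simp only [hzA, Finset.mem_filter, Finset.mem_univ, true_and] at hi
      rcases mul_eq_zero.1 (hpq i) with h | h
      · exact absurd h hi
      · exact h
    refine ⟨?_, hcompl⟩
    show (zeroA p).card = m - 1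
    have h1 : (zeroA p).card ≤ m - 1 := cardA p.rep p.rep_nonzero
    have h2 : (zeroA p)ᶜ ⊆
        Finset.univ.filter (fun i : Fin (m + n - 2) => b i ⬝ᵥ q.rep = 0) := by
      intro i hi
      simp only [Finset.mem_compl] at hi
      simp only [Finset.mem_filter, Finset.mem_univ, true_and]
      exact hcompl i hi
    have h3 : ((zeroA p)ᶜ).card ≤ n - 1 :=
      le_trans (Finset.card_le_card h2) (cardB q.rep q.rep_nonzero)
    have h4 : ((zeroA p)ᶜ).card = (m + n - 2) - (zeroA p).card := by
      rw [Finset.card_compl]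
      simp only [Fintype.card_fin]
    have h5 : (zeroA p).card ≤ m + n - 2 := by
      have := Finset.card_le_univ (zeroA p)
      simpa using this
    omega
  -- dimensions of the relevant kernels
  have hdim1A : ∀ S : Finset (Fin (m + n - 2)), S.card = m - 1 →
      Module.finrank ℝ (segreKer a S) = 1 := by
    intro S hS
    rw [finrank_segreKer a S (ha S (by omega)), hS]
    omega
  have hdim1B : ∀ S : Finset (Fin (m + n - 2)), S.card = m - 1 →
      Module.finrank ℝ (segreKer b Sᶜ) = 1 := by
    intro S hS
    have hSc : Sᶜ.card = n - 1 := by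
      rw [Finset.card_compl, hS]
      simp only [Fintype.card_fin]
      omega
    rw [finrank_segreKer b Sᶜ (hb Sᶜ (by omega)), hSc]
    omega
  let f : T → {S : Finset (Fin (m + n - 2)) // S.card = m - 1} :=
    fun pq => ⟨zeroA pq.1.1, (key pq.1 pq.2).1⟩
  have hbij : Function.Bijective f := by
    constructor
    · -- injectivity
      rintro ⟨⟨p, q⟩, hpq⟩ ⟨⟨p', q'⟩, hpq'⟩ hf
      have hS : zeroA p = zeroA p' := congrArg Subtype.val hf
      have hcard : (zeroA p).card = m - 1 := (key (p, q) hpq).1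
      -- p = p'
      have hpker : p.rep ∈ segreKer a (zeroA p) := by
        rw [mem_segreKer]
        intro i hi
        simp only [hzA, Finset.mem_filter, Finset.mem_univ, true_and] at hi
        exact hi
      have hp'ker : p'.rep ∈ segreKer a (zeroA p) := by
        rw [mem_segreKer]
        intro i hi
        rw [hS] at hi
        simp only [hzA, Finset.mem_filter, Finset.mem_univ, true_and] at hi
        exact hi
      have hp : p = p' := by
        have := mk_eq_mk_of_finrank_one (segreKer a (zeroA p)) (hdim1A _ hcard)
          hpker hp'ker p.rep_nonzero p'.rep_nonzero
        rwa [Projectivization.mk_rep, Projectivization.mk_rep] at this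
      -- q = q'
      have hqker : q.rep ∈ segreKer b (zeroA p)ᶜ := by
        rw [mem_segreKer]
        intro i hi
        exact (key (p, q) hpq).2 i (Finset.mem_compl.1 hi)
      have hq'ker : q'.rep ∈ segreKer b (zeroA p)ᶜ := by
        rw [mem_segreKer]
        intro i hi
        rw [hS] at hi
        exact (key (p', q') hpq').2 i (Finset.mem_compl.1 hi)
      have hq : q = q' := by
        have := mk_eq_mk_of_finrank_one (segreKer b (zeroA p)ᶜ) (hdim1B _ hcard)
          hqker hq'ker q.rep_nonzero q'.rep_nonzero
        rwa [Projectivization.mk_rep, Projectivization.mk_rep] at this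
      apply Subtype.ext
      rw [Prod.ext_iff]
      exact ⟨hp, hq⟩
    · -- surjectivity
      rintro ⟨S, hS⟩
      obtain ⟨x, hxW, hx0⟩ := exists_ne_zero_mem_of_finrank_one _ (hdim1A S hS)
      obtain ⟨y, hyW, hy0⟩ := exists_ne_zero_mem_of_finrank_one _ (hdim1B S hS)
      set p : ℙ ℝ (Fin m → ℝ) := Projectivization.mk ℝ x hx0 with hp
      set q : ℙ ℝ (Fin n → ℝ) := Projectivization.mk ℝ y hy0 with hq
      -- representatives stay in the kernels
      have hprep : p.rep ∈ segreKer a S := by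
        have : Projectivization.mk ℝ p.rep p.rep_nonzero = Projectivization.mk ℝ x hx0 := by
          rw [Projectivization.mk_rep]
        obtain ⟨c, hc⟩ := (Projectivization.mk_eq_mk_iff' ℝ _ _ _ _).1 this
        rw [← hc]
        exact Submodule.smul_mem _ c hxW
      have hqrep : q.rep ∈ segreKer b Sᶜ := by
        have : Projectivization.mk ℝ q.rep q.rep_nonzero = Projectivization.mk ℝ y hy0 := by
          rw [Projectivization.mk_rep]
        obtain ⟨c, hc⟩ := (Projectivization.mk_eq_mk_iff' ℝ _ _ _ _).1 this
        rw [← hc]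
        exact Submodule.smul_mem _ c hyW
      have hsol : (p, q) ∈ T := by
        intro i
        by_cases hiS : i ∈ S
        · have := (mem_segreKer a S p.rep).1 hprep i hiS
          simp [this]
        · have := (mem_segreKer b Sᶜ q.rep).1 hqrep i (Finset.mem_compl.2 hiS)
          simp [this]
      refine ⟨⟨(p, q), hsol⟩, ?_⟩
      apply Subtype.ext
      show zeroA p = S
      have hsub : S ⊆ zeroA p := by
        intro i hi
        simp only [hzA, Finset.mem_filter, Finset.mem_univ, true_and]
        exact (mem_segreKer a S p.rep).1 hprep i hi
      have hcard : (zeroA p).card = m - 1 := (key (p, q) hsol).1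
      exact (Finset.eq_of_subset_of_card_le hsub (by omega)).symm
  -- now count
  rw [Nat.card_eq_of_bijective f hbij]
  rw [Nat.card_eq_fintype_card, Fintype.card_subtype]
  have : Finset.univ.filter (fun S : Finset (Fin (m + n - 2)) => S.card = m - 1) =
      Finset.powersetCard (m - 1) Finset.univ := by
    ext S
    simp [Finset.mem_powersetCard_univ]
  rw [this, Finset.card_powersetCard]
  simp
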